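/- Let c ∈ ℂ, let a ≥ 1 be a natural number, and let g : ℂ → ℂ be analytic at c with g(c) ≠ 0. Define f(z) := (z − c)ᵃ · g(z) near c (so f has a zero of order a at c). Then (z − c)² · MP(f)(z) / (z − c)ᵃ tends to a² · g(c)/(4π²) as z → c within the punctured neighborhood 𝓝[≠] c; since a² g(c)/(4π²) ≠ 0, the quadratic differential MP(f) has order exactly a − 2 at c. -/

import Mathlib

open Complex Filter

/-- The Mulase–Penkava density of a function `f : ℂ → ℂ`:
`MP f z = (1/(4π²)) · (f'(z))² / (f z · (1 − f z))`. -/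
noncomputable def MP (f : ℂ → ℂ) (z : ℂ) : ℂ :=
  (1 / (4 * (Real.pi : ℂ) ^ 2)) * (deriv f z) ^ 2 / (f z * (1 - f z))

/-- If `f` has a zero of order `a ≥ 1` at `c` (i.e. `f z = (z − c)ᵃ · g z` near `c`, with `g`
analytic at `c` and `g c ≠ 0`), then `(z − c)² · MP f z / (z − c)ᵃ` tends to
`a² · g c / (4π²) ≠ 0` as `z → c` within `𝓝[≠] c`, so `MP f` has order exactly `a − 2`
at `c`. -/
lemma aux_MP (C A G D F d p : ℂ) (hd : d ≠ 0) (hp : p ≠ 0) (hG : G ≠ 0) (hF : F ≠ 0) :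
    d ^ 2 * (C * (A * p * G + p * d * D) ^ 2 / (p * d * G * F)) / (p * d) =
      C * (A * G + d * D) ^ 2 / (G * F) := by
  rw [mul_div_assoc', div_div]
  rw [show d ^ 2 * (C * (A * p * G + p * d * D) ^ 2) =
      (p * d) ^ 2 * (C * (A * G + d * D) ^ 2) by ring,
    show p * d * G * F * (p * d) = (p * d) ^ 2 * (G * F) by ring,
    mul_div_mul_left _ _ (pow_ne_zero 2 (mul_ne_zero hp hd))]

theorem stmt_2 (c : ℂ) (a : ℕ) (ha : 1 ≤ a) (g f : ℂ → ℂ)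
    (hg : AnalyticAt ℂ g c) (hgc : g c ≠ 0)
    (hf : ∀ᶠ z in nhds c, f z = (z - c) ^ a * g z) :
    Tendsto (fun z => (z - c) ^ 2 * MP f z / (z - c) ^ a) (nhdsWithin c {c}ᶜ)
      (nhds ((a : ℂ) ^ 2 * g c / (4 * (Real.pi : ℂ) ^ 2))) ∧
    (a : ℂ) ^ 2 * g c / (4 * (Real.pi : ℂ) ^ 2) ≠ 0 := by
  obtain ⟨n, rfl⟩ : ∃ n, a = n + 1 := ⟨a - 1, (Nat.succ_pred_eq_of_pos ha).symm⟩
  set a := n + 1 with ha'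
  have hpi : (4 * (Real.pi : ℂ) ^ 2) ≠ 0 := by
    simp [Real.pi_ne_zero, Complex.ofReal_ne_zero]
  have hne : (a : ℂ) ^ 2 * g c / (4 * (Real.pi : ℂ) ^ 2) ≠ 0 := by
    apply div_ne_zero _ hpi
    exact mul_ne_zero (pow_ne_zero _ (Nat.cast_ne_zero.2 (Nat.succ_ne_zero n))) hgc
  refine ⟨?_, hne⟩
  have hgc' : ContinuousAt g c := hg.continuousAt
  have hf0 : Tendsto f (nhds c) (nhds 0) := by
    have h : Tendsto (fun z => (z - c) ^ a * g z) (nhds c) (nhds ((c - c) ^ a * g c)) :=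
      (((continuous_id.sub continuous_const).pow a).tendsto c).mul hgc'
    have h' : Tendsto (fun z => (z - c) ^ a * g z) (nhds c) (nhds 0) := by
      simpa [sub_self, ha'] using h
    exact h'.congr' (hf.mono fun z hz => hz.symm)
  have hgE : ∀ᶠ z in nhds c, AnalyticAt ℂ g z := hg.eventually_analyticAt
  have hgne : ∀ᶠ z in nhds c, g z ≠ 0 := hgc'.eventually_ne hgc
  have hfne : ∀ᶠ z in nhds c, 1 - f z ≠ 0 := by
    filter_upwards [hf0.eventually_ne (show (0:ℂ) ≠ 1 by norm_num)] with z hz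
    exact sub_ne_zero.2 (Ne.symm hz)
  have hderiv : ∀ᶠ z in nhds c,
      deriv f z = (a : ℂ) * (z - c) ^ n * g z + (z - c) ^ a * deriv g z := by
    filter_upwards [hf.eventually_nhds, hgE] with z hz hgz
    have h1 : HasDerivAt (fun w => (w - c) ^ a) ((a : ℂ) * (z - c) ^ n * 1) z := by
      simpa [ha'] using (((hasDerivAt_id z).sub_const c).fun_pow a)
    have h2 : HasDerivAt g (deriv g z) z := hgz.differentiableAt.hasDerivAt
    have h3 : HasDerivAt (fun w => (w - c) ^ a * g w)
        ((a : ℂ) * (z - c) ^ n * 1 * g z + (z - c) ^ a * deriv g z) z := h1.mul h2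
    rw [Filter.EventuallyEq.deriv_eq hz]
    simpa using h3.deriv
  have key : ∀ᶠ z in nhdsWithin c {c}ᶜ,
      (z - c) ^ 2 * MP f z / (z - c) ^ a =
        (1 / (4 * (Real.pi : ℂ) ^ 2)) * ((a : ℂ) * g z + (z - c) * deriv g z) ^ 2
          / (g z * (1 - f z)) := by
    filter_upwards [eventually_nhdsWithin_of_eventually_nhds hf,
      eventually_nhdsWithin_of_eventually_nhds hderiv,
      eventually_nhdsWithin_of_eventually_nhds hgne,
      eventually_nhdsWithin_of_eventually_nhds hfne,
      self_mem_nhdsWithin] with z hfz hdz hgz hfz1 hzc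
    have hd : z - c ≠ 0 := sub_ne_zero.2 hzc
    have hpow : (z - c) ^ a = (z - c) ^ n * (z - c) := by rw [ha', pow_succ]
    have hpn : (z - c) ^ n ≠ 0 := pow_ne_zero _ hd
    have hfz1' : 1 - (z - c) ^ n * (z - c) * g z ≠ 0 := by
      rw [← hpow, ← hfz]; exact hfz1
    rw [MP, hdz, hfz, hpow]
    exact aux_MP _ _ _ _ _ _ _ hd hpn hgz hfz1'
  have hdg : ContinuousAt (deriv g) c := by
    have h := (ContinuousLinearMap.apply ℂ ℂ (1:ℂ)).continuous.continuousAt.comp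
      hg.fderiv.continuousAt
    simpa [Function.comp_def, fderiv_apply_one_eq_deriv] using h
  have t1 : Tendsto (fun z => (a : ℂ) * g z + (z - c) * deriv g z) (nhds c)
      (nhds ((a : ℂ) * g c + (c - c) * deriv g c)) :=
    (tendsto_const_nhds.mul hgc').add (((continuous_id.sub continuous_const).tendsto c).mul hdg)
  have h2 : Tendsto (fun z => 1 - f z) (nhds c) (nhds (1 - 0)) :=
    Filter.Tendsto.sub tendsto_const_nhds hf0
  have hden : Tendsto (fun z => g z * (1 - f z)) (nhds c) (nhds (g c * (1 - 0))) :=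
    Filter.Tendsto.mul hgc' h2
  have h1 : Tendsto (fun z =>
      (1 / (4 * (Real.pi : ℂ) ^ 2)) * ((a : ℂ) * g z + (z - c) * deriv g z) ^ 2
        / (g z * (1 - f z))) (nhds c)
      (nhds ((1 / (4 * (Real.pi : ℂ) ^ 2)) * ((a : ℂ) * g c + (c - c) * deriv g c) ^ 2
        / (g c * (1 - 0)))) :=
    Filter.Tendsto.div (tendsto_const_nhds.mul (t1.pow 2)) hden (by simpa using hgc)
  have heq : (1 / (4 * (Real.pi : ℂ) ^ 2)) * ((a : ℂ) * g c + (c - c) * deriv g c) ^ 2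
        / (g c * (1 - 0)) = (a : ℂ) ^ 2 * g c / (4 * (Real.pi : ℂ) ^ 2) := by
    rw [sub_self, zero_mul, add_zero, sub_zero, mul_one]
    field_simp
  rw [heq] at h1
  exact (h1.mono_left nhdsWithin_le_nhds).congr' (key.mono fun z hz => hz.symm)
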